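/- Let U be a finite set with element weights u: U → ℝ_{≥0}, let 𝒞 be a finite collection of subsets of U, let S ⊆ 𝒞 with |S| = k be the current output, and let a ≥ 0. Construct a modified instance by adding, for each set T ∈ S, a fresh element e_T of weight a that is contained in T and in no other set of 𝒞. Then for every F ⊆ 𝒞 with |F| = k, the total weight covered by F in the modified instance equals (the total weight covered by F in the original instance) − a·|F\S| + a·k. Consequently, F maximizes the α-stable k-cover objective (covered weight minus a·|F\S|) over k-element subfamilies of 𝒞 if and only if F is an optimal k-cover of the modified instance. -/
import Mathlib


/-- **Reduction of α-stable k-set cover to optimal k-set cover on a modified instance.**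
Add to each set `T` of the current output `S` a fresh element (modelled as `Sum.inr T`)
of weight `a` belonging to `T` only.  Then for every `k`-element `F ⊆ 𝒞`, the covered
weight in the modified instance equals the originally covered weight minus
`a * |F \ S|` plus `a * k`; consequently `F` maximizes the α-stable objective over
`k`-element subfamilies of `𝒞` iff it is an optimal `k`-cover of the modified
instance. -/
theorem alpha_stable_k_cover_reduction {U : Type*} [Fintype U] [DecidableEq U]
    (u : U → ℝ) (hu : ∀ e, 0 ≤ u e) (𝒞 : Finset (Finset U)) (k : ℕ)
    (S : Finset (Finset U)) (hS𝒞 : S ⊆ 𝒞) (hSk : S.card = k)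
    (a : ℝ) (ha : 0 ≤ a) :
    let m : Finset U → Finset (U ⊕ Finset U) := fun T =>
      T.image Sum.inl ∪ (if T ∈ S then {Sum.inr T} else ∅)
    let u' : U ⊕ Finset U → ℝ := Sum.elim u fun _ => a
    let cov : Finset (Finset U) → ℝ := fun F => ∑ e ∈ F.biUnion id, u e
    let cov' : Finset (Finset U) → ℝ := fun F => ∑ z ∈ F.biUnion m, u' z
    (∀ F ⊆ 𝒞, F.card = k →
      cov' F = cov F - a * ((F \ S).card : ℝ) + a * (k : ℝ)) ∧
    (∀ F ⊆ 𝒞, F.card = k →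
      ((∀ F' ⊆ 𝒞, F'.card = k →
          cov F' - a * ((F' \ S).card : ℝ) ≤ cov F - a * ((F \ S).card : ℝ)) ↔
        (∀ F' ⊆ 𝒞, F'.card = k → cov' F' ≤ cov' F))) := by
  intro m u' cov cov'
  have key : ∀ F : Finset (Finset U), F.card = k →
      cov' F = cov F - a * ((F \ S).card : ℝ) + a * (k : ℝ) := by
    intro F hFk
    have hset : F.biUnion m =
        (F.biUnion id).image Sum.inl ∪ (F ∩ S).image Sum.inr := by
      ext z
      simp only [Finset.mem_biUnion, Finset.mem_union, Finset.mem_image, m,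
        Finset.mem_inter, id]
      constructor
      · rintro ⟨T, hT, hz⟩
        rcases hz with ⟨e, he, rfl⟩ | h
        · exact Or.inl ⟨e, ⟨T, hT, he⟩, rfl⟩
        · by_cases hTS : T ∈ S
          · simp only [if_pos hTS, Finset.mem_singleton] at h
            exact Or.inr ⟨T, ⟨hT, hTS⟩, h.symm⟩
          · simp [if_neg hTS] at h
      · rintro (⟨e, ⟨T, hT, he⟩, rfl⟩ | ⟨T, ⟨hT, hTS⟩, rfl⟩)
        · exact ⟨T, hT, Or.inl ⟨e, he, rfl⟩⟩
        · exact ⟨T, hT, Or.inr (by simp [if_pos hTS])⟩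
    have hdisj : Disjoint ((F.biUnion id).image Sum.inl)
        ((F ∩ S).image (Sum.inr : Finset U → U ⊕ Finset U)) := by
      simp only [Finset.disjoint_left, Finset.mem_image]
      rintro z ⟨e, _, rfl⟩ ⟨T, _, h⟩
      exact Sum.inl_ne_inr h.symm
    have h1 : ∑ z ∈ (F.biUnion id).image Sum.inl, u' z = cov F := by
      rw [Finset.sum_image (by simp)]
      rfl
    have h2 : ∑ z ∈ (F ∩ S).image (Sum.inr : Finset U → U ⊕ Finset U), u' z
        = a * ((F ∩ S).card : ℝ) := by
      rw [Finset.sum_image (by simp)]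
      simp [u', mul_comm]
    have hcard : ((F ∩ S).card : ℝ) = (k : ℝ) - ((F \ S).card : ℝ) := by
      have := Finset.card_inter_add_card_sdiff F S
      have h : (F ∩ S).card + (F \ S).card = k := by rw [this, hFk]
      have := congrArg (Nat.cast : ℕ → ℝ) h
      push_cast at this
      linarith
    show ∑ z ∈ F.biUnion m, u' z = _
    rw [hset, Finset.sum_union hdisj, h1, h2, hcard]
    ring
  refine ⟨fun F _ hFk => key F hFk, fun F hF𝒞 hFk => ?_⟩
  constructor
  · intro h F' hF' hF'k
    rw [key F' hF'k, key F hFk]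
    linarith [h F' hF' hF'k]
  · intro h F' hF' hF'k
    have := h F' hF' hF'k
    rw [key F' hF'k, key F hFk] at this
    linarith
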